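/- Logit decomposition of the untreated potential-outcome law (proved in the Supplementary Materials, Appendix C). For a binary outcome Y₀ ∈ {0,1} and binary treatment A ∈ {0,1}, define the log odds-ratio α(z,c) = log[ p(Y₀=1 | A=1, z, c) · p(Y₀=0 | A=0, z, c) / ( p(Y₀=1 | A=0, z, c) · p(Y₀=0 | A=1, z, c) ) ]. Then for all a ∈ {0,1}, z ∈ 𝒵, c ∈ 𝒞: logit p(Y₀=1 | A=a, z, c) = α(z,c)·a − log[ e^{α(z,c)} · p(A=1 | Y₀=0, z, c) + p(A=0 | Y₀=0, z, c) ] + logit p(Y₀=1 | z, c), where logit(x) = log(x/(1−x)). -/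

import Mathlib

/-- The logit function `x ↦ log(x/(1-x))`. -/
noncomputable def logit (x : ℝ) : ℝ := Real.log (x / (1 - x))

/-- Logit decomposition of the untreated potential-outcome law: for binary
outcome and binary treatment with strictly positive joint pmf `p`, with
`α(z,c)` the log odds ratio, for all `a, z, c`:
`logit p(Y₀=1|A=a,z,c) = α(z,c)·a - log(e^{α(z,c)} p(A=1|Y₀=0,z,c) + p(A=0|Y₀=0,z,c))
  + logit p(Y₀=1|z,c)`. -/
theorem logit_decomposition
    {Z C : Type*} [Fintype Z] [Fintype C] [Nonempty Z] [Nonempty C]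
    (p : Bool → Bool → Z → C → ℝ)
    (hpos : ∀ a y z c, 0 < p a y z c)
    (hsum : ∑ a : Bool, ∑ y : Bool, ∑ z : Z, ∑ c : C, p a y z c = 1)
    (a : Bool) (z : Z) (c : C) :
    -- `p(Y₀=1 | A=a', z, c)`
    let pY1 : Bool → ℝ := fun a' => p a' true z c / (p a' true z c + p a' false z c)
    -- `p(Y₀=0 | A=a', z, c)`
    let pY0 : Bool → ℝ := fun a' => p a' false z c / (p a' true z c + p a' false z c)
    -- `p(A=a' | Y₀=0, z, c)`
    let pA : Bool → ℝ := fun a' => p a' false z c / (p true false z c + p false false z c)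
    -- `p(Y₀=1 | z, c)`
    let pY1m : ℝ := (∑ a' : Bool, p a' true z c) / (∑ a' : Bool, ∑ y : Bool, p a' y z c)
    -- log odds ratio `α(z,c)`
    let α : ℝ := Real.log (pY1 true * pY0 false / (pY1 false * pY0 true))
    logit (pY1 a)
      = α * (if a then (1 : ℝ) else 0)
          - Real.log (Real.exp α * pA true + pA false)
          + logit pY1m := by
  have hA := hpos true true z c
  have hB := hpos true false z c
  have hC := hpos false true z c
  have hD := hpos false false z c
  clear hsum
  simp only [logit, Fintype.sum_bool]
  set A := p true true z c with hA'
  set B := p true false z c with hB'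
  set C0 := p false true z c with hC'
  set D := p false false z c with hD'
  have hAB : 0 < A + B := by linarith
  have hCD : 0 < C0 + D := by linarith
  have hBD : 0 < B + D := by linarith
  have hAC : 0 < A + C0 := by linarith
  have hS : 0 < A + B + (C0 + D) := by linarith
  have harg : A / (A + B) * (D / (C0 + D)) / (C0 / (C0 + D) * (B / (A + B)))
      = A * D / (C0 * B) := by field_simp
  rw [harg, Real.exp_log (by positivity)]
  have h2 : A * D / (C0 * B) * (B / (B + D)) + D / (B + D)
      = D * (A + C0) / (C0 * (B + D)) := by field_simp
  rw [h2]
  have h3 : 1 - (A + C0) / (A + B + (C0 + D)) = (B + D) / (A + B + (C0 + D)) := by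
    field_simp; ring
  rw [h3]
  have h4 : (A + C0) / (A + B + (C0 + D)) / ((B + D) / (A + B + (C0 + D)))
      = (A + C0) / (B + D) := by
    field_simp
  rw [h4]
  have h5 : Real.log ((A + C0) / (B + D)) - Real.log (D * (A + C0) / (C0 * (B + D)))
      = Real.log (C0 / D) := by
    rw [← Real.log_div (by positivity) (by positivity)]
    congr 1
    field_simp
  cases a with
  | false =>
      simp only [Bool.false_eq_true, if_false, mul_zero, zero_sub, neg_add_eq_sub]
      rw [h5]
      have h6 : 1 - C0 / (C0 + D) = D / (C0 + D) := by field_simp; ring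
      rw [h6]
      congr 1
      field_simp
      exact mul_div_cancel_right₀ _ hCD.ne'
  | true =>
      simp only [if_true, mul_one]
      have h6 : 1 - A / (A + B) = B / (A + B) := by field_simp; ring
      rw [h6]
      have h7 : A / (A + B) / (B / (A + B)) = A / B := by field_simp
      rw [h7]
      have h8 : Real.log (A / B) = Real.log (A * D / (C0 * B)) + Real.log (C0 / D) := by
        rw [← Real.log_mul (by positivity) (by positivity)]
        congr 1
        field_simp
      linarith [h5, h8]
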